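/- arXiv:1606.05300 — 2 statements merged into one kernel-verified Lean document; each statement's English description precedes it below -/
import Mathlib

section
/- Let α_n ≡ α ∈ [1/2, 1) and β = 1 − α. For 0 ≤ m < n, let z^{mn} be the inside-out optimal plan (z_{ii} = π_i^n, z_{mj} = π_j^n for m < j < n, z_{in} = π_i^m − π_i^n for i < m, z_{mn} = π_m^m − Σ_{j=m}^{n-1} π_j^n) and z̃^{mn} the product plan (z̃_{ii} = π_i^n for i ≤ m, z̃_{ij} = π_i^m π_j^n for i ≤ m < j ≤ n). Then Σ_{1 ≤ i ≤ m < j ≤ n} |z^{mn}_{ij} − z̃^{mn}_{ij}| ≤ 4β². -/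
open Finset

/-- `kmPi α i n` is `π_i^n = α_i ∏_{k=i+1}^n (1 - α_k)` (empty product = 1). -/
noncomputable def kmPi (α : ℕ → ℝ) (i n : ℕ) : ℝ :=
  α i * ∏ k ∈ Finset.Icc (i + 1) n, (1 - α k)
/-- The "inside-out" transport plan between `π^m` and `π^n` (for `m ≤ n`):
`z_{ii} = π_i^n` for `i ≤ m`, `z_{mj} = π_j^n` for `m < j < n`,
`z_{in} = π_i^m - π_i^n` for `i < m`, `z_{mn} = π_m^m - Σ_{j=m}^{n-1} π_j^n`,
and `z_{ij} = 0` otherwise. -/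
noncomputable def zio (α : ℕ → ℝ) (m n : ℕ) (i j : ℕ) : ℝ :=
  if i = j then kmPi α i n
  else if i = m ∧ m < j ∧ j < n then kmPi α j n
  else if i < m ∧ j = n then kmPi α i m - kmPi α i n
  else if i = m ∧ j = n then kmPi α m m - ∑ k ∈ Finset.Ico m n, kmPi α k n
  else 0
/-- The sub-optimal product transport plan between `π^m` and `π^n` (for `m ≤ n`):
`z̃_{ii} = π_i^n` for `i ≤ m`, `z̃_{ij} = π_i^m π_j^n` for `i ≤ m < j ≤ n`, else `0`. -/
noncomputable def ztilde (α : ℕ → ℝ) (m n : ℕ) (i j : ℕ) : ℝ :=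
  if i = j ∧ i ≤ m then kmPi α i n
  else if i ≤ m ∧ m < j ∧ j ≤ n then kmPi α i m * kmPi α j n
  else 0

lemma kmPi_const (α : ℝ) (i n : ℕ) (hi : 1 ≤ i) :
    kmPi (fun k => if k = 0 then 1 else α) i n = α * (1 - α) ^ (n - i) := by
  unfold kmPi
  have h0 : i ≠ 0 := by omega
  simp only [h0, if_false]
  congr 1
  rw [Finset.prod_congr rfl (fun k hk => ?_), Finset.prod_const, Nat.card_Icc]
  · congr 1; omega
  · simp only [Finset.mem_Icc] at hk
    have : k ≠ 0 := by omega
    simp [this]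

lemma geom_Ico (α : ℝ) (m : ℕ) : ∀ n, m ≤ n →
    ∑ k ∈ Finset.Ico m n, α * (1 - α) ^ (n - k) = (1 - α) - (1 - α) ^ (n - m + 1) := by
  intro n hn
  induction n, hn using Nat.le_induction with
  | base => simp
  | succ n hn ih =>
    have h1 : ∑ k ∈ Finset.Ico m n, α * (1 - α) ^ (n + 1 - k)
        = (1 - α) * ∑ k ∈ Finset.Ico m n, α * (1 - α) ^ (n - k) := by
      rw [Finset.mul_sum]
      refine Finset.sum_congr rfl fun k hk => ?_
      simp only [Finset.mem_Ico] at hk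
      rw [show n + 1 - k = (n - k) + 1 from by omega, pow_succ]
      ring
    rw [Finset.sum_Ico_succ_top hn, h1, ih]
    rw [show n + 1 - n = 1 from by omega,
        show n + 1 - m + 1 = (n - m + 1) + 1 from by omega, pow_succ, pow_one]
    ring

lemma km_pointwise (α : ℝ) (hα1 : 1 / 2 ≤ α) (hα2 : α < 1) (m n i j : ℕ)
    (hm : 1 ≤ m) (hmn : m < n) (hi : i ∈ Finset.Icc 1 m) (hj : j ∈ Finset.Icc (m + 1) n) :
    |zio (fun k => if k = 0 then 1 else α) m n i j -
        ztilde (fun k => if k = 0 then 1 else α) m n i j| ≤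
      (if i < m then α * (1 - α) ^ (m - i) else (1 - α)) *
        (if j < n then α * (1 - α) ^ (n - j) else (1 - α)) := by
  have hα0 : (0:ℝ) ≤ α := by linarith
  have hβ0 : (0:ℝ) ≤ 1 - α := by linarith
  have hβ1 : (1:ℝ) - α ≤ 1 := by linarith
  simp only [Finset.mem_Icc] at hi hj
  obtain ⟨hi1, hi2⟩ := hi
  obtain ⟨hj1, hj2⟩ := hj
  have hij : i ≠ j := by omega
  have hjn1 : 1 ≤ j := by omega
  have hn1 : 1 ≤ n := by omega
  rcases lt_or_eq_of_le hi2 with him | him <;> rcases lt_or_eq_of_le hj2 with hjn | hjn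
  · -- i < m, j < n
    have hz : zio (fun k => if k = 0 then 1 else α) m n i j = 0 := by
      unfold zio
      rw [if_neg hij, if_neg (by omega), if_neg (by omega), if_neg (by omega)]
    have ht : ztilde (fun k => if k = 0 then 1 else α) m n i j
        = (α * (1 - α) ^ (m - i)) * (α * (1 - α) ^ (n - j)) := by
      unfold ztilde
      rw [if_neg (by omega), if_pos (by omega), kmPi_const α i m hi1, kmPi_const α j n hjn1]
    rw [hz, ht, zero_sub, abs_neg, abs_of_nonneg (by positivity), if_pos him, if_pos hjn]
  · -- i < m, j = n
    have hz : zio (fun k => if k = 0 then 1 else α) m n i j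
        = α * (1 - α) ^ (m - i) - α * (1 - α) ^ (n - i) := by
      unfold zio
      rw [if_neg hij, if_neg (by omega), if_pos ⟨him, hjn⟩, kmPi_const α i m hi1,
        kmPi_const α i n hi1]
    have ht : ztilde (fun k => if k = 0 then 1 else α) m n i j
        = (α * (1 - α) ^ (m - i)) * α := by
      unfold ztilde
      rw [if_neg (by omega), if_pos (by omega), hjn, kmPi_const α i m hi1, kmPi_const α n n hn1,
        Nat.sub_self, pow_zero, mul_one]
    have hpow : (1 - α) ^ (n - m) ≤ 1 - α := by
      calc (1 - α) ^ (n - m) ≤ (1 - α) ^ 1 := pow_le_pow_of_le_one hβ0 hβ1 (by omega)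
        _ = 1 - α := pow_one _
    have key : α * (1 - α) ^ (m - i) - α * (1 - α) ^ (n - i)
          - (α * (1 - α) ^ (m - i)) * α
        = (α * (1 - α) ^ (m - i)) * ((1 - α) - (1 - α) ^ (n - m)) := by
      rw [show n - i = (m - i) + (n - m) from by omega, pow_add]
      ring
    have hsubnn : (0:ℝ) ≤ (1 - α) - (1 - α) ^ (n - m) := by linarith
    rw [hz, ht, key, abs_of_nonneg (by positivity), if_pos him, if_neg (by omega)]
    exact mul_le_mul_of_nonneg_left (by linarith [pow_nonneg hβ0 (n - m)]) (by positivity)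
  · -- i = m, j < n
    have hz : zio (fun k => if k = 0 then 1 else α) m n i j
        = α * (1 - α) ^ (n - j) := by
      unfold zio
      rw [if_neg hij, if_pos ⟨him, by omega, hjn⟩, kmPi_const α j n hjn1]
    have ht : ztilde (fun k => if k = 0 then 1 else α) m n i j
        = α * (α * (1 - α) ^ (n - j)) := by
      unfold ztilde
      rw [if_neg (by omega), if_pos (by omega), him, kmPi_const α m m hm,
        kmPi_const α j n hjn1, Nat.sub_self, pow_zero, mul_one]
    have key : α * (1 - α) ^ (n - j) - α * (α * (1 - α) ^ (n - j))
        = (1 - α) * (α * (1 - α) ^ (n - j)) := by ring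
    rw [hz, ht, key, abs_of_nonneg (by positivity), if_neg (by omega), if_pos hjn]
  · -- i = m, j = n
    have hsum : ∑ k ∈ Finset.Ico m n, kmPi (fun k => if k = 0 then 1 else α) k n
        = (1 - α) - (1 - α) ^ (n - m + 1) := by
      rw [Finset.sum_congr rfl (fun k hk => ?_), geom_Ico α m n (le_of_lt hmn)]
      simp only [Finset.mem_Ico] at hk
      exact kmPi_const α k n (by omega)
    have hz : zio (fun k => if k = 0 then 1 else α) m n i j
        = α - ((1 - α) - (1 - α) ^ (n - m + 1)) := by
      unfold zio
      rw [if_neg hij, if_neg (by omega), if_neg (by omega), if_pos ⟨him, hjn⟩, hsum,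
        kmPi_const α m m hm, Nat.sub_self, pow_zero, mul_one]
    have ht : ztilde (fun k => if k = 0 then 1 else α) m n i j = α * α := by
      unfold ztilde
      rw [if_neg (by omega), if_pos (by omega), him, hjn, kmPi_const α m m hm,
        kmPi_const α n n hn1]
      simp
    have key : α - ((1 - α) - (1 - α) ^ (n - m + 1)) - α * α
        = (1 - α) ^ (n - m + 1) - (1 - α) ^ 2 := by ring
    have hpow : (1 - α) ^ (n - m + 1) ≤ (1 - α) ^ 2 :=
      pow_le_pow_of_le_one hβ0 hβ1 (by omega)
    rw [hz, ht, key, abs_of_nonpos (by linarith), if_neg (by omega), if_neg (by omega)]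
    have h1 : (0:ℝ) ≤ (1 - α) ^ (n - m + 1) := by positivity
    nlinarith

/-- for constant `α ∈ [1/2,1)`, `β = 1-α`, and `0 ≤ m < n`, the total
variation between the inside-out plan and the product plan over the off-diagonal
block `1 ≤ i ≤ m < j ≤ n` is at most `4β²`. -/
theorem km_plans_close (α : ℝ) (hα : α ∈ Set.Ico (1 / 2 : ℝ) 1)
    (m n : ℕ) (hmn : m < n) :
    ∑ i ∈ Finset.Icc 1 m, ∑ j ∈ Finset.Icc (m + 1) n,
      |zio (fun k => if k = 0 then 1 else α) m n i j -
        ztilde (fun k => if k = 0 then 1 else α) m n i j| ≤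
      4 * (1 - α) ^ 2 := by
  obtain ⟨hα1, hα2⟩ := hα
  have hα0 : (0:ℝ) ≤ α := by linarith
  have hβ0 : (0:ℝ) ≤ 1 - α := by linarith
  rcases Nat.eq_zero_or_pos m with hm | hm
  · subst hm
    simp only [Finset.Icc_eq_empty_of_lt (by omega : (1:ℕ) > 0), Finset.sum_empty]
    positivity
  · have step1 : ∑ i ∈ Finset.Icc 1 m, ∑ j ∈ Finset.Icc (m + 1) n,
        |zio (fun k => if k = 0 then 1 else α) m n i j -
          ztilde (fun k => if k = 0 then 1 else α) m n i j|
        ≤ ∑ i ∈ Finset.Icc 1 m, ∑ j ∈ Finset.Icc (m + 1) n,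
            ((if i < m then α * (1 - α) ^ (m - i) else (1 - α)) *
              (if j < n then α * (1 - α) ^ (n - j) else (1 - α))) := by
      refine Finset.sum_le_sum fun i hi => Finset.sum_le_sum fun j hj => ?_
      exact km_pointwise α hα1 hα2 m n i j hm hmn hi hj
    refine step1.trans ?_
    have prod_eq : ∑ i ∈ Finset.Icc 1 m, ∑ j ∈ Finset.Icc (m + 1) n,
        ((if i < m then α * (1 - α) ^ (m - i) else (1 - α)) *
          (if j < n then α * (1 - α) ^ (n - j) else (1 - α)))
        = (∑ i ∈ Finset.Icc 1 m, (if i < m then α * (1 - α) ^ (m - i) else (1 - α))) *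
          (∑ j ∈ Finset.Icc (m + 1) n, (if j < n then α * (1 - α) ^ (n - j) else (1 - α))) := by
      rw [Finset.sum_mul_sum]
    rw [prod_eq]
    have hA : ∑ i ∈ Finset.Icc 1 m, (if i < m then α * (1 - α) ^ (m - i) else (1 - α))
        = ((1 - α) - (1 - α) ^ m) + (1 - α) := by
      rw [show Finset.Icc 1 m = Finset.Ico 1 (m + 1) from (Finset.Ico_add_one_right_eq_Icc 1 m).symm,
        Finset.sum_Ico_succ_top hm, if_neg (lt_irrefl m)]
      congr 1
      rw [Finset.sum_congr rfl (fun i hi => ?_), geom_Ico α 1 m hm,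
        show m - 1 + 1 = m from by omega]
      simp only [Finset.mem_Ico] at hi
      rw [if_pos hi.2]
    have hB : ∑ j ∈ Finset.Icc (m + 1) n, (if j < n then α * (1 - α) ^ (n - j) else (1 - α))
        = ((1 - α) - (1 - α) ^ (n - m)) + (1 - α) := by
      rw [show Finset.Icc (m + 1) n = Finset.Ico (m + 1) (n + 1) from
        (Finset.Ico_add_one_right_eq_Icc (m + 1) n).symm,
        Finset.sum_Ico_succ_top hmn, if_neg (lt_irrefl n)]
      congr 1
      rw [Finset.sum_congr rfl (fun j hj => ?_), geom_Ico α (m + 1) n hmn,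
        show n - (m + 1) + 1 = n - m from by omega]
      simp only [Finset.mem_Ico] at hj
      rw [if_pos hj.2]
    rw [hA, hB]
    have h1 : (0:ℝ) ≤ (1 - α) ^ m := by positivity
    have h2 : (0:ℝ) ≤ (1 - α) ^ (n - m) := by positivity
    have h3 : (1 - α) ^ m ≤ 1 - α := by
      calc (1 - α) ^ m ≤ (1 - α) ^ 1 :=
            pow_le_pow_of_le_one hβ0 (by linarith) hm
        _ = 1 - α := pow_one _
    have h4 : (1 - α) ^ (n - m) ≤ 1 - α := by
      calc (1 - α) ^ (n - m) ≤ (1 - α) ^ 1 :=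
            pow_le_pow_of_le_one hβ0 (by linarith) (by omega)
        _ = 1 - α := pow_one _
    calc (1 - α - (1 - α) ^ m + (1 - α)) * (1 - α - (1 - α) ^ (n - m) + (1 - α))
        ≤ (2 * (1 - α)) * (2 * (1 - α)) :=
          mul_le_mul (by linarith) (by linarith) (by linarith) (by linarith)
      _ = 4 * (1 - α) ^ 2 := by ring
end

section
/- If α_n ≡ α ∈ [1/2, 1), then for all 0 ≤ m ≤ n the recursive quantities satisfy 0 ≤ c_{mn} − d_{mn} ≤ 4m(1 − α)². -/
open Finset

/-- A feasible transport plan between the probability vectors `π^m` and `π^n`. -/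
def IsPlan (α : ℕ → ℝ) (m n : ℕ) (z : ℕ → ℕ → ℝ) : Prop :=
  (∀ i ≤ m, ∀ j ≤ n, 0 ≤ z i j) ∧
  (∀ i ≤ m, ∑ j ∈ Finset.range (n + 1), z i j = kmPi α i m) ∧
  (∀ j ≤ n, ∑ i ∈ Finset.range (m + 1), z i j = kmPi α j n)

/-- Transport cost `Σ_{i=0}^m Σ_{j=0}^n z_{ij} d_{i-1,j-1}`, where indices of `D` are
shifted by one: `D i j` stands for `d_{i-1,j-1}`. -/
noncomputable def planCost (D : ℕ → ℕ → ℝ) (m n : ℕ) (z : ℕ → ℕ → ℝ) : ℝ :=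
  ∑ i ∈ Finset.range (m + 1), ∑ j ∈ Finset.range (n + 1), z i j * D i j

/-- `D : ℕ → ℕ → ℝ` encodes the family `d_{mn}` for `m, n ∈ {-1,0,1,...}` with indices
shifted by one: `D (m+1) (n+1) = d_{m,n}`, `D 0 (k+1) = d_{-1,k}`, etc.  It is the
recursive optimal-transport family: boundary values `d_{-1,-1} = 0`,
`d_{-1,k} = d_{k,-1} = 1`, and `d_{mn}` is the minimum transport cost between
`π^m` and `π^n` (the minimum, i.e. attained greatest lower bound). -/
def IsKMDist (α : ℕ → ℝ) (D : ℕ → ℕ → ℝ) : Prop :=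
  D 0 0 = 0 ∧ (∀ k : ℕ, D 0 (k + 1) = 1) ∧ (∀ k : ℕ, D (k + 1) 0 = 1) ∧
  ∀ m n : ℕ,
    IsLeast {c : ℝ | ∃ z : ℕ → ℕ → ℝ, IsPlan α m n z ∧ c = planCost D m n z}
      (D (m + 1) (n + 1))
namespace KMaux

variable (α : ℝ)

/-- the constant-α sequence with α₀ = 1 -/
def Af : ℕ → ℝ := fun k => if k = 0 then 1 else α

lemma kmPi_zero (n : ℕ) : kmPi (Af α) 0 n = (1 - α) ^ n := by
  unfold kmPi Af
  rw [if_pos rfl, one_mul]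
  have h : ∀ k ∈ Finset.Icc (0+1) n, (1 - if k = 0 then (1:ℝ) else α) = 1 - α := by
    intro k hk
    simp only [Finset.mem_Icc] at hk
    rw [if_neg (by omega)]
  rw [Finset.prod_congr rfl h, Finset.prod_const, Nat.card_Icc]
  norm_num

lemma kmPi_pos' {i n : ℕ} (h1 : 1 ≤ i) (h2 : i ≤ n) :
    kmPi (Af α) i n = α * (1 - α) ^ (n - i) := by
  unfold kmPi Af
  rw [if_neg (by omega)]
  have h : ∀ k ∈ Finset.Icc (i+1) n, (1 - if k = 0 then (1:ℝ) else α) = 1 - α := by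
    intro k hk
    simp only [Finset.mem_Icc] at hk
    rw [if_neg (by omega)]
  rw [Finset.prod_congr rfl h, Finset.prod_const, Nat.card_Icc]
  congr 2
  omega

lemma kmPi_self {n : ℕ} (h : 1 ≤ n) : kmPi (Af α) n n = α := by
  rw [kmPi_pos' α h le_rfl]; simp

lemma kmPi_nonneg (hα : α ∈ Set.Ico (1/2 : ℝ) 1) (i n : ℕ) :
    0 ≤ kmPi (Af α) i n := by
  obtain ⟨h1, h2⟩ := hα
  unfold kmPi Af
  apply mul_nonneg
  · split <;> linarith
  · apply Finset.prod_nonneg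
    intro k _; split <;> linarith

lemma kmPi_succ_top {i n : ℕ} (h : i ≤ n) :
    kmPi (Af α) i (n + 1) = (1 - α) * kmPi (Af α) i n := by
  unfold kmPi Af
  rw [Finset.prod_Icc_succ_top (show i+1 ≤ n+1 by omega), if_neg (Nat.succ_ne_zero n)]
  ring

lemma kmPi_shift {i m n : ℕ} (him : i ≤ m) (hmn : m ≤ n) :
    kmPi (Af α) i n = (1 - α) ^ (n - m) * kmPi (Af α) i m := by
  induction n with
  | zero => have : m = 0 := by omega
            subst this; simp
  | succ n ih =>
    rcases Nat.lt_or_ge m (n+1) with h | h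
    · have hmn' : m ≤ n := by omega
      rw [kmPi_succ_top α (by omega), ih hmn', show n + 1 - m = (n - m) + 1 by omega,
        pow_succ]
      ring
    · have : m = n + 1 := by omega
      subst this; simp

lemma sum_kmPi (n : ℕ) : ∑ i ∈ Finset.range (n + 1), kmPi (Af α) i n = 1 := by
  induction n with
  | zero => simp [kmPi, Af]
  | succ n ih =>
    rw [Finset.sum_range_succ]
    have h1 : ∀ i ∈ Finset.range (n+1), kmPi (Af α) i (n+1) = (1-α) * kmPi (Af α) i n := by
      intro i hi
      simp only [Finset.mem_range] at hi
      exact kmPi_succ_top α (by omega)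
    rw [Finset.sum_congr rfl h1, ← Finset.mul_sum, ih, kmPi_self α (by omega)]
    ring

lemma sum_kmPi_Icc {m n : ℕ} (h : m ≤ n) :
    ∑ j ∈ Finset.Icc (m+1) n, kmPi (Af α) j n = 1 - (1-α)^(n-m) := by
  have key : ∑ i ∈ Finset.range (m+1), kmPi (Af α) i n = (1-α)^(n-m) := by
    have : ∀ i ∈ Finset.range (m+1), kmPi (Af α) i n
        = (1-α)^(n-m) * kmPi (Af α) i m := by
      intro i hi
      simp only [Finset.mem_range] at hi
      exact kmPi_shift α (by omega) h
    rw [Finset.sum_congr rfl this, ← Finset.mul_sum, sum_kmPi, mul_one]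
  have split : Finset.range (n+1) = Finset.range (m+1) ∪ Finset.Icc (m+1) n := by
    ext x; simp only [Finset.mem_union, Finset.mem_range, Finset.mem_Icc]; omega
  have disj : Disjoint (Finset.range (m+1)) (Finset.Icc (m+1) n) := by
    rw [Finset.disjoint_left]
    intro x hx hx'
    simp only [Finset.mem_range] at hx
    simp only [Finset.mem_Icc] at hx'
    omega
  have := sum_kmPi α n
  rw [split, Finset.sum_union disj, key] at this
  linarith

end KMaux
-- continuation: Ee and grand induction
namespace KMaux

variable (α : ℝ)

/-- weight w p k = α (1-α)^(p-1-k), for k < p -/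
noncomputable def w (p k : ℕ) : ℝ := α * (1 - α) ^ (p - 1 - k)

/-- `Ee α p s = e_{p,s} = 1 - c_{p+1,s+1}` for `p ≤ s`; equals 1 for `s ≤ p`. -/
noncomputable def Ee : ℕ → ℕ → ℝ
  | _, 0 => 1
  | p, (s+1) =>
    if s + 1 ≤ p then 1
    else (1 - α) * Ee p s + α * ∑ k ∈ Finset.range p, w α p k * Ee k s
  termination_by p s => s

lemma Ee_zero (p : ℕ) : Ee α p 0 = 1 := by rw [Ee]

lemma Ee_of_le {p s : ℕ} (h : s ≤ p) : Ee α p s = 1 := by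
  cases s with
  | zero => rw [Ee]
  | succ t => rw [Ee, if_pos h]

lemma Ee_diag (p : ℕ) : Ee α p p = 1 := Ee_of_le α le_rfl

lemma Ee_rec {p s : ℕ} (h : p ≤ s) :
    Ee α p (s+1) = (1 - α) * Ee α p s + α * ∑ k ∈ Finset.range p, w α p k * Ee α k s := by
  rw [Ee, if_neg (by omega)]

lemma w_nonneg (hα : α ∈ Set.Ico (1/2 : ℝ) 1) (p k : ℕ) : 0 ≤ w α p k := by
  obtain ⟨h1, h2⟩ := hα
  exact mul_nonneg (by linarith) (pow_nonneg (by linarith) _)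

lemma sum_w (p : ℕ) : ∑ k ∈ Finset.range p, w α p k = 1 - (1-α)^p := by
  induction p with
  | zero => simp
  | succ p ih =>
    rw [Finset.sum_range_succ]
    have h1 : ∀ k ∈ Finset.range p, w α (p+1) k = (1-α) * w α p k := by
      intro k hk
      simp only [Finset.mem_range] at hk
      unfold w
      rw [show p + 1 - 1 - k = (p - 1 - k) + 1 by omega, pow_succ]
      ring
    rw [Finset.sum_congr rfl h1, ← Finset.mul_sum, ih]
    unfold w
    rw [show p + 1 - 1 - p = 0 by omega, pow_succ]
    ring

lemma w_succ {p k : ℕ} (h : k < p) : w α (p+1) k = (1-α) * w α p k := by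
  unfold w
  rw [show p + 1 - 1 - k = (p - 1 - k) + 1 by omega, pow_succ]
  ring

lemma w_top (p : ℕ) : w α (p+1) p = α := by
  unfold w; simp

lemma Ee_zero_row (s : ℕ) : Ee α 0 s = (1-α)^s := by
  induction s with
  | zero => simp [Ee_zero]
  | succ s ih => rw [Ee_rec α (Nat.zero_le s), ih]; simp [pow_succ]; ring

end KMaux
namespace KMaux

variable (α : ℝ)

lemma sum_wEe_succ (p s : ℕ) :
    ∑ k ∈ Finset.range (p+1), w α (p+1) k * Ee α k s
      = (1-α) * ∑ k ∈ Finset.range p, w α p k * Ee α k s + α * Ee α p s := by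
  rw [Finset.sum_range_succ, w_top]
  congr 1
  rw [Finset.mul_sum]
  apply Finset.sum_congr rfl
  intro k hk
  rw [w_succ α (Finset.mem_range.mp hk)]
  ring

lemma psi (hα : α ∈ Set.Ico (1/2 : ℝ) 1) : ∀ p : ℕ,
    (∀ s : ℕ, 0 ≤ Ee α p s ∧ Ee α p s ≤ 1) ∧
    (∀ s : ℕ, Ee α p (s+1) ≤ Ee α p s) ∧
    (∀ s : ℕ, Ee α p s ≤ Ee α (p+1) s) ∧
    (∀ s : ℕ, p ≤ s → 2 * Ee α p (s+1) ≤ Ee α p s + Ee α p (s+2)) ∧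
    (∀ s : ℕ, p+1 ≤ s → Ee α p s - Ee α p (s+1) ≤ Ee α (p+1) s - Ee α p s) := by
  have ha1 : (1/2 : ℝ) ≤ α := hα.1
  have ha2 : α < 1 := hα.2
  have ha0 : (0:ℝ) ≤ α := by linarith
  have hb0 : (0:ℝ) ≤ 1 - α := by linarith
  intro p
  induction p using Nat.strong_induction_on with
  | _ p IH =>
  have hchain : ∀ q, q ≤ p → ∀ k, k ≤ q → ∀ s, Ee α k s ≤ Ee α q s := by
    intro q
    induction q with
    | zero =>
      intro _ k hk s
      have : k = 0 := by omega
      subst this; exact le_rfl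
    | succ q ihq =>
      intro hqp k hk s
      rcases Nat.eq_or_lt_of_le hk with rfl | hlt
      · exact le_rfl
      · exact le_trans (ihq (by omega) k (by omega) s) ((IH q (by omega)).2.2.1 s)
  -- Ψ1
  have h1 : ∀ s : ℕ, 0 ≤ Ee α p s ∧ Ee α p s ≤ 1 := by
    intro s
    induction s with
    | zero => rw [Ee_zero]; norm_num
    | succ s ihs =>
      by_cases hc : s + 1 ≤ p
      · rw [Ee_of_le α hc]; norm_num
      · have hps : p ≤ s := by omega
        rw [Ee_rec α hps]
        have hbp : (0:ℝ) ≤ (1-α)^p := pow_nonneg hb0 p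
        constructor
        · apply add_nonneg
          · exact mul_nonneg hb0 ihs.1
          · apply mul_nonneg ha0
            apply Finset.sum_nonneg
            intro k hk
            exact mul_nonneg (w_nonneg α hα p k) ((IH k (Finset.mem_range.mp hk)).1 s).1
        · have hsum : ∑ k ∈ Finset.range p, w α p k * Ee α k s ≤ 1 - (1-α)^p := by
            rw [← sum_w α p]
            apply Finset.sum_le_sum
            intro k hk
            have hE := ((IH k (Finset.mem_range.mp hk)).1 s).2
            have hw := w_nonneg α hα p k
            nlinarith
          nlinarith [ihs.2, mul_le_mul_of_nonneg_left hsum ha0,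
            mul_nonneg ha0 hbp, mul_le_mul_of_nonneg_left ihs.2 hb0]
  -- Ψ2
  have h2 : ∀ s : ℕ, Ee α p (s+1) ≤ Ee α p s := by
    intro s
    by_cases hc : s + 1 ≤ p
    · rw [Ee_of_le α hc, Ee_of_le α (by omega)]
    · have hps : p ≤ s := by omega
      rw [Ee_rec α hps]
      have hsum : ∑ k ∈ Finset.range p, w α p k * Ee α k s
          ≤ (1 - (1-α)^p) * Ee α p s := by
        rw [← sum_w α p, Finset.sum_mul]
        apply Finset.sum_le_sum
        intro k hk
        have hk' := Finset.mem_range.mp hk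
        have hm := hchain p le_rfl k (by omega) s
        have hw := w_nonneg α hα p k
        nlinarith
      have hbp : (0:ℝ) ≤ (1-α)^p := pow_nonneg hb0 p
      have hX0 : 0 ≤ Ee α p s := (h1 s).1
      nlinarith [mul_le_mul_of_nonneg_left hsum ha0,
        mul_nonneg (mul_nonneg ha0 hbp) hX0]
  -- Ψ3
  have h3 : ∀ s : ℕ, Ee α p s ≤ Ee α (p+1) s := by
    intro s
    induction s with
    | zero => rw [Ee_zero, Ee_zero]
    | succ s ihs =>
      by_cases hc : s + 1 ≤ p
      · rw [Ee_of_le α hc, Ee_of_le α (by omega)]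
      · by_cases hc2 : s + 1 = p + 1
        · rw [hc2, Ee_diag]
          exact (h1 (p+1)).2
        · have hps : p + 1 ≤ s := by omega
          rw [Ee_rec α (by omega : p ≤ s), Ee_rec α hps, sum_wEe_succ]
          set S := ∑ k ∈ Finset.range p, w α p k * Ee α k s with hS
          have hSle : S ≤ (1 - (1-α)^p) * Ee α p s := by
            rw [hS, ← sum_w α p, Finset.sum_mul]
            apply Finset.sum_le_sum
            intro k hk
            have hk' := Finset.mem_range.mp hk
            have hm := hchain p le_rfl k (by omega) s
            have hw := w_nonneg α hα p k
            nlinarith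
          have hbp : (0:ℝ) ≤ (1-α)^p := pow_nonneg hb0 p
          have hX0 : 0 ≤ Ee α p s := (h1 s).1
          nlinarith [mul_le_mul_of_nonneg_left ihs hb0,
            mul_le_mul_of_nonneg_left hSle (mul_nonneg ha0 ha0),
            mul_nonneg (mul_nonneg (mul_nonneg ha0 ha0) hbp) hX0]
  -- Ψ4 (convexity in s)
  have h4 : ∀ s : ℕ, p ≤ s → 2 * Ee α p (s+1) ≤ Ee α p s + Ee α p (s+2) := by
    intro s hs
    induction s, hs using Nat.le_induction with
    | base =>
      set S0 := ∑ k ∈ Finset.range p, w α p k * Ee α k p with hS0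
      set S1 := ∑ k ∈ Finset.range p, w α p k * Ee α k (p+1) with hS1
      have he1 : Ee α p (p+1) = (1-α) + α * S0 := by
        rw [Ee_rec α le_rfl, Ee_diag, mul_one]
      have he2 : Ee α p (p+2) = (1-α) * Ee α p (p+1) + α * S1 := by
        rw [show p+2 = (p+1)+1 by rfl, Ee_rec α (by omega)]
      have claim : (1+α) * S0 - S1 ≤ α := by
        have hper : ∀ k ∈ Finset.range p,
            w α p k * ((1+α) * Ee α k p - Ee α k (p+1))
              ≤ w α p k * (Ee α (k+1) p - (1-α) * Ee α k p) := by
          intro k hk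
          have hk' := Finset.mem_range.mp hk
          have h5k := (IH k hk').2.2.2.2 p (by omega)
          have hw := w_nonneg α hα p k
          nlinarith
        have hsum := Finset.sum_le_sum hper
        have hL : ∑ k ∈ Finset.range p, w α p k * ((1+α) * Ee α k p - Ee α k (p+1))
            = (1+α) * S0 - S1 := by
          rw [hS0, hS1, Finset.mul_sum, ← Finset.sum_sub_distrib]
          apply Finset.sum_congr rfl
          intro k _; ring
        have hR : ∑ k ∈ Finset.range p, w α p k * (Ee α (k+1) p - (1-α) * Ee α k p)
            = (∑ k ∈ Finset.range p, w α p k * Ee α (k+1) p) - (1-α) * S0 := by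
          rw [hS0, Finset.mul_sum, ← Finset.sum_sub_distrib]
          apply Finset.sum_congr rfl
          intro k _; ring
        have hT1 : (∑ k ∈ Finset.range p, w α p k * Ee α (k+1) p)
            ≤ α + (1-α) * S0 := by
          rcases Nat.eq_zero_or_pos p with hp0 | hp0
          · subst hp0
            simp only [Finset.range_zero, Finset.sum_empty]
            have hz : S0 = 0 := by rw [hS0]; simp
            rw [hz]; linarith
          · obtain ⟨q, rfl⟩ : ∃ q, p = q + 1 := ⟨p - 1, by omega⟩
            rw [Finset.sum_range_succ, w_top, Ee_diag, mul_one]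
            have hrw : ∀ k ∈ Finset.range q,
                w α (q+1) k * Ee α (k+1) (q+1)
                  = (1-α) * (w α (q+1) (k+1) * Ee α (k+1) (q+1)) := by
              intro k hk
              have hk' := Finset.mem_range.mp hk
              have hww : w α (q+1) k = (1-α) * w α (q+1) (k+1) := by
                unfold w
                rw [show q + 1 - 1 - k = (q + 1 - 1 - (k+1)) + 1 by omega, pow_succ]
                ring
              rw [hww]; ring
            rw [Finset.sum_congr rfl hrw, ← Finset.mul_sum]
            have hle : ∑ k ∈ Finset.range q, w α (q+1) (k+1) * Ee α (k+1) (q+1) ≤ S0 := by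
              rw [hS0, Finset.sum_range_succ' (fun k => w α (q+1) k * Ee α k (q+1)) q]
              have h0 : 0 ≤ w α (q+1) 0 * Ee α 0 (q+1) := by
                apply mul_nonneg (w_nonneg α hα _ _)
                rw [Ee_zero_row]
                exact pow_nonneg hb0 _
              linarith
            linarith [mul_le_mul_of_nonneg_left hle hb0]
        calc (1+α) * S0 - S1
            = ∑ k ∈ Finset.range p, w α p k * ((1+α) * Ee α k p - Ee α k (p+1)) := hL.symm
          _ ≤ ∑ k ∈ Finset.range p, w α p k * (Ee α (k+1) p - (1-α) * Ee α k p) := hsum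
          _ = (∑ k ∈ Finset.range p, w α p k * Ee α (k+1) p) - (1-α) * S0 := hR
          _ ≤ α := by linarith
      have hαclaim : α * ((1+α) * S0 - S1) ≤ α * α :=
        mul_le_mul_of_nonneg_left claim ha0
      rw [Ee_diag, he2, he1]
      nlinarith [hαclaim]
    | succ s hs ihs =>
      have e1 : Ee α p (s+1) = (1-α) * Ee α p s
          + α * ∑ k ∈ Finset.range p, w α p k * Ee α k s := Ee_rec α hs
      have e2 : Ee α p (s+2) = (1-α) * Ee α p (s+1)
          + α * ∑ k ∈ Finset.range p, w α p k * Ee α k (s+1) := by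
        rw [show s+2 = (s+1)+1 from rfl]
        exact Ee_rec α (by omega)
      have e3 : Ee α p (s+3) = (1-α) * Ee α p (s+2)
          + α * ∑ k ∈ Finset.range p, w α p k * Ee α k (s+2) := by
        rw [show s+3 = (s+2)+1 from rfl]
        exact Ee_rec α (by omega)
      have hsum : 2 * ∑ k ∈ Finset.range p, w α p k * Ee α k (s+1)
          ≤ (∑ k ∈ Finset.range p, w α p k * Ee α k s)
            + ∑ k ∈ Finset.range p, w α p k * Ee α k (s+2) := by
        have hper : ∀ k ∈ Finset.range p,
            w α p k * (2 * Ee α k (s+1)) ≤ w α p k * (Ee α k s + Ee α k (s+2)) := by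
          intro k hk
          have hk' := Finset.mem_range.mp hk
          have hck := (IH k hk').2.2.2.1 s (by omega)
          have hw := w_nonneg α hα p k
          nlinarith
        have h' := Finset.sum_le_sum hper
        have hA : ∑ k ∈ Finset.range p, w α p k * (2 * Ee α k (s+1))
            = 2 * ∑ k ∈ Finset.range p, w α p k * Ee α k (s+1) := by
          rw [Finset.mul_sum]; apply Finset.sum_congr rfl; intro k _; ring
        have hB : ∑ k ∈ Finset.range p, w α p k * (Ee α k s + Ee α k (s+2))
            = (∑ k ∈ Finset.range p, w α p k * Ee α k s)
              + ∑ k ∈ Finset.range p, w α p k * Ee α k (s+2) := by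
          rw [← Finset.sum_add_distrib]
          apply Finset.sum_congr rfl
          intro k _; ring
        rw [hA, hB] at h'
        exact h'
      have A1 := mul_le_mul_of_nonneg_left hsum ha0
      have A2 := mul_le_mul_of_nonneg_left ihs hb0
      show 2 * Ee α p (s+2) ≤ Ee α p (s+1) + Ee α p (s+3)
      linarith [e1, e2, e3, A1, A2]
  -- Ψ5
  have h5 : ∀ s : ℕ, p+1 ≤ s → Ee α p s - Ee α p (s+1) ≤ Ee α (p+1) s - Ee α p s := by
    intro s hs
    induction s, hs using Nat.le_induction with
    | base =>
      show Ee α p (p+1) - Ee α p (p+2) ≤ Ee α (p+1) (p+1) - Ee α p (p+1)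
      linarith [h4 p le_rfl, Ee_diag α p, Ee_diag α (p+1)]
    | succ s hs ihs =>
      have hdelta : Ee α (p+1) (s+1) - Ee α p (s+1)
          = (1-α) * (Ee α (p+1) s - Ee α p s)
            + α * (Ee α p s - Ee α p (s+1)) := by
        rw [Ee_rec α (show p+1 ≤ s from hs), Ee_rec α (show p ≤ s by omega), sum_wEe_succ]
        ring
      have hconv := h4 s (by omega)
      have hP1 := mul_le_mul_of_nonneg_left ihs hb0
      show Ee α p (s+1) - Ee α p (s+2) ≤ Ee α (p+1) (s+1) - Ee α p (s+1)
      linarith [hdelta, hP1, hconv]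
  exact ⟨h1, h2, h3, h4, h5⟩

end KMaux
namespace KMaux

variable (α : ℝ)

lemma delta_rec {p s : ℕ} (hs : p + 1 ≤ s) :
    Ee α (p+1) (s+1) - Ee α p (s+1)
      = (1-α) * (Ee α (p+1) s - Ee α p s) + α * (Ee α p s - Ee α p (s+1)) := by
  rw [Ee_rec α (show p+1 ≤ s from hs), Ee_rec α (show p ≤ s by omega), sum_wEe_succ]
  ring

section derived
variable (hα : α ∈ Set.Ico (1/2 : ℝ) 1)
include hα

lemma Ee_nonneg (p s : ℕ) : 0 ≤ Ee α p s := ((psi α hα p).1 s).1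
lemma Ee_le_one (p s : ℕ) : Ee α p s ≤ 1 := ((psi α hα p).1 s).2

lemma Ee_mono1 {k p : ℕ} (h : k ≤ p) (s : ℕ) : Ee α k s ≤ Ee α p s := by
  induction p with
  | zero => have : k = 0 := by omega
            subst this; exact le_rfl
  | succ p ih =>
    rcases Nat.eq_or_lt_of_le h with rfl | hlt
    · exact le_rfl
    · exact le_trans (ih (by omega)) ((psi α hα p).2.2.1 s)

lemma Ee_anti2 {p s t : ℕ} (h : s ≤ t) : Ee α p t ≤ Ee α p s := by
  induction t, h using Nat.le_induction with
  | base => exact le_rfl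
  | succ t ht iht => exact le_trans ((psi α hα p).2.1 t) iht

lemma delta_anti {p s t : ℕ} (hs : p + 1 ≤ s) (hst : s ≤ t) :
    Ee α (p+1) t - Ee α p t ≤ Ee α (p+1) s - Ee α p s := by
  have hb0 : (0:ℝ) ≤ 1 - α := by have := hα.2; linarith
  have ha0 : (0:ℝ) ≤ α := by have := hα.1; linarith
  induction t, hst using Nat.le_induction with
  | base => exact le_rfl
  | succ t ht iht =>
    have h5 := (psi α hα p).2.2.2.2 t (by omega)
    have hre := delta_rec α (show p + 1 ≤ t by omega)
    nlinarith [mul_le_mul_of_nonneg_left h5 ha0]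

lemma Ee_MD {q p s t : ℕ} (hqp : q ≤ p) (hps : p ≤ s) (hst : s ≤ t) :
    Ee α p t - Ee α q t ≤ Ee α p s - Ee α q s := by
  induction p, hqp using Nat.le_induction with
  | base => simp
  | succ p hp ihp =>
    have h1 : Ee α (p+1) t - Ee α p t ≤ Ee α (p+1) s - Ee α p s :=
      delta_anti α hα (by omega) hst
    have h2 := ihp (by omega)
    linarith

lemma Ee_TR {p q s : ℕ} (hpq : p ≤ q) (hqs : q ≤ s) :
    Ee α p q + Ee α q s ≤ 1 + Ee α p s := by
  have := Ee_MD α hα hpq le_rfl hqs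
  have hd := Ee_diag α q
  linarith

end derived

lemma kmPi_w {k m : ℕ} (h : k < m) : kmPi (Af α) (k+1) m = w α m k := by
  rw [kmPi_pos' α (by omega) (by omega)]
  unfold w
  congr 2
  omega

lemma sum_kmPi_range (m : ℕ) :
    ∑ k ∈ Finset.range m, kmPi (Af α) (k+1) m = 1 - (1-α)^m := by
  rw [← sum_w α m]
  apply Finset.sum_congr rfl
  intro k hk
  exact kmPi_w α (Finset.mem_range.mp hk)

/-- the (★) recursion for Ee -/
lemma Ee_star {m n : ℕ} (h : m ≤ n) :
    Ee α m n = (1-α)^(n-m)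
      + ∑ k ∈ Finset.range m, ∑ j ∈ Finset.Icc (m+1) n,
          kmPi (Af α) (k+1) m * kmPi (Af α) j n * Ee α k (j-1) := by
  induction n, h using Nat.le_induction with
  | base =>
    rw [Ee_diag]
    have : Finset.Icc (m+1) m = ∅ := by
      apply Finset.Icc_eq_empty; omega
    simp [this]
  | succ n hn ihn =>
    rw [Ee_rec α hn, ihn]
    have hsplit : ∀ k ∈ Finset.range m,
        ∑ j ∈ Finset.Icc (m+1) (n+1),
            kmPi (Af α) (k+1) m * kmPi (Af α) j (n+1) * Ee α k (j-1)
          = (1-α) * (∑ j ∈ Finset.Icc (m+1) n,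
              kmPi (Af α) (k+1) m * kmPi (Af α) j n * Ee α k (j-1))
            + kmPi (Af α) (k+1) m * α * Ee α k n := by
      intro k hk
      rw [Finset.sum_Icc_succ_top (by omega : m+1 ≤ n+1)]
      rw [kmPi_self α (by omega), show n+1-1 = n from rfl]
      congr 1
      rw [Finset.mul_sum]
      apply Finset.sum_congr rfl
      intro j hj
      have hj' := Finset.mem_Icc.mp hj
      rw [kmPi_succ_top α (by omega : j ≤ n)]
      ring
    rw [Finset.sum_congr rfl hsplit, Finset.sum_add_distrib, ← Finset.mul_sum,
      show n+1-m = (n-m)+1 by omega, pow_succ]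
    have hlast : ∑ k ∈ Finset.range m, kmPi (Af α) (k+1) m * α * Ee α k n
        = α * ∑ k ∈ Finset.range m, w α m k * Ee α k n := by
      rw [Finset.mul_sum]
      apply Finset.sum_congr rfl
      intro k hk
      rw [kmPi_w α (Finset.mem_range.mp hk)]
      ring
    rw [hlast]
    ring

end KMaux
namespace KMaux

variable (α : ℝ)

lemma sum_split {m n : ℕ} (h : m ≤ n) (f : ℕ → ℝ) :
    ∑ j ∈ Finset.range (n+1), f j
      = ∑ j ∈ Finset.range (m+1), f j + ∑ j ∈ Finset.Icc (m+1) n, f j := by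
  have hsplit : Finset.range (n+1) = Finset.range (m+1) ∪ Finset.Icc (m+1) n := by
    ext x; simp only [Finset.mem_union, Finset.mem_range, Finset.mem_Icc]; omega
  have disj : Disjoint (Finset.range (m+1)) (Finset.Icc (m+1) n) := by
    rw [Finset.disjoint_left]
    intro x hx hx'
    simp only [Finset.mem_range] at hx
    simp only [Finset.mem_Icc] at hx'
    omega
  rw [hsplit, Finset.sum_union disj]

lemma ztilde_low {m n i j : ℕ} (hi : i ≤ m) (hj : j ≤ m) :
    ztilde (Af α) m n i j = if j = i then kmPi (Af α) i n else 0 := by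
  unfold ztilde
  by_cases hij : i = j
  · rw [if_pos ⟨hij, hi⟩, if_pos hij.symm]
  · rw [if_neg (by tauto), if_neg (by omega), if_neg (fun hc => hij hc.symm)]

lemma ztilde_off {m n i j : ℕ} (hi : i ≤ m) (hj1 : m < j) (hj2 : j ≤ n) :
    ztilde (Af α) m n i j = kmPi (Af α) i m * kmPi (Af α) j n := by
  unfold ztilde
  rw [if_neg (by omega), if_pos ⟨hi, hj1, hj2⟩]

lemma ztilde_inner_row {m n i : ℕ} (h : m ≤ n) (hi : i ≤ m) (g : ℕ → ℕ → ℝ) :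
    ∑ j ∈ Finset.range (n+1), ztilde (Af α) m n i j * g i j
      = kmPi (Af α) i n * g i i
        + ∑ j ∈ Finset.Icc (m+1) n, kmPi (Af α) i m * kmPi (Af α) j n * g i j := by
  rw [sum_split h (fun j => ztilde (Af α) m n i j * g i j)]
  congr 1
  · have hcong : ∀ j ∈ Finset.range (m+1),
        ztilde (Af α) m n i j * g i j
          = if j = i then kmPi (Af α) i n * g i j else 0 := by
      intro j hj
      have hj' := Finset.mem_range.mp hj
      rw [ztilde_low α hi (by omega)]
      by_cases hji : j = i
      · rw [if_pos hji, if_pos hji]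
      · rw [if_neg hji, if_neg hji, zero_mul]
    rw [Finset.sum_congr rfl hcong, Finset.sum_ite_eq' (Finset.range (m+1)) i
      (fun j => kmPi (Af α) i n * g i j), if_pos (Finset.mem_range.mpr (by omega))]
  · apply Finset.sum_congr rfl
    intro j hj
    have hj' := Finset.mem_Icc.mp hj
    rw [ztilde_off α hi hj'.1 hj'.2]

lemma planCost_ztilde {m n : ℕ} (h : m ≤ n) (g : ℕ → ℕ → ℝ) :
    planCost g m n (ztilde (Af α) m n)
      = (∑ i ∈ Finset.range (m+1), kmPi (Af α) i n * g i i)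
        + ∑ i ∈ Finset.range (m+1), ∑ j ∈ Finset.Icc (m+1) n,
            kmPi (Af α) i m * kmPi (Af α) j n * g i j := by
  unfold planCost
  rw [← Finset.sum_add_distrib]
  apply Finset.sum_congr rfl
  intro i hi
  have hi' := Finset.mem_range.mp hi
  exact ztilde_inner_row α h (by omega) g

lemma ztilde_plan (hα : α ∈ Set.Ico (1/2 : ℝ) 1) {m n : ℕ} (h : m ≤ n) :
    IsPlan (Af α) m n (ztilde (Af α) m n) := by
  refine ⟨?_, ?_, ?_⟩
  · intro i _ j _
    unfold ztilde
    split
    · exact kmPi_nonneg α hα _ _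
    · split
      · exact mul_nonneg (kmPi_nonneg α hα _ _) (kmPi_nonneg α hα _ _)
      · exact le_rfl
  · intro i hi
    have := ztilde_inner_row α h hi (fun _ _ => (1:ℝ))
    simp only [mul_one] at this
    rw [this, ← Finset.mul_sum, sum_kmPi_Icc α h, kmPi_shift α hi h]
    ring
  · intro j hj
    by_cases hjm : j ≤ m
    · have hcong : ∀ i ∈ Finset.range (m+1),
          ztilde (Af α) m n i j = if i = j then kmPi (Af α) j n else 0 := by
        intro i hi
        have hi' := Finset.mem_range.mp hi
        rw [ztilde_low α (by omega) hjm]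
        by_cases hij : i = j
        · rw [if_pos hij.symm, if_pos hij, hij]
        · rw [if_neg (fun hc => hij hc.symm), if_neg hij]
      rw [Finset.sum_congr rfl hcong,
        Finset.sum_ite_eq' (Finset.range (m+1)) j (fun _ => kmPi (Af α) j n),
        if_pos (Finset.mem_range.mpr (show j < m + 1 by omega))]
    · have hcong : ∀ i ∈ Finset.range (m+1),
          ztilde (Af α) m n i j = kmPi (Af α) i m * kmPi (Af α) j n := by
        intro i hi
        have hi' := Finset.mem_range.mp hi
        exact ztilde_off α (by omega) (by omega) hj
      rw [Finset.sum_congr rfl hcong, ← Finset.sum_mul, sum_kmPi, one_mul]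

end KMaux
namespace KMaux

variable (α : ℝ)

lemma plan_transpose {a b : ℕ} {z : ℕ → ℕ → ℝ} (hz : IsPlan (Af α) a b z) :
    IsPlan (Af α) b a (fun x y => z y x) :=
  ⟨fun i hi j hj => hz.1 j hj i hi, fun i hi => hz.2.2 i hi, fun j hj => hz.2.1 j hj⟩

lemma planCost_transpose {a b : ℕ} (D : ℕ → ℕ → ℝ) (z : ℕ → ℕ → ℝ)
    (hsym : ∀ i j, i ≤ a → j ≤ b → D i j = D j i) :
    planCost D b a (fun x y => z y x) = planCost D a b z := by
  unfold planCost
  rw [Finset.sum_comm]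
  apply Finset.sum_congr rfl
  intro x hx
  apply Finset.sum_congr rfl
  intro y hy
  have hx' : x ≤ a := Nat.lt_succ_iff.mp (Finset.mem_range.mp hx)
  have hy' : y ≤ b := Nat.lt_succ_iff.mp (Finset.mem_range.mp hy)
  dsimp only
  rw [hsym x y hx' hy']

lemma D_symm {D : ℕ → ℕ → ℝ} (hD : IsKMDist (Af α) D) : ∀ i j, D i j = D j i := by
  have key : ∀ s i j, i + j ≤ s → D i j = D j i := by
    intro s
    induction s with
    | zero =>
      intro i j hij
      have : i = 0 ∧ j = 0 := by omega
      rw [this.1, this.2]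
    | succ s ihs =>
      intro i j hij
      match i, j with
      | 0, 0 => rfl
      | 0, (k+1) => rw [hD.2.1 k, hD.2.2.1 k]
      | (k+1), 0 => rw [hD.2.1 k, hD.2.2.1 k]
      | (a+1), (b+1) =>
        have hab := hD.2.2.2 a b
        have hba := hD.2.2.2 b a
        have hsym' : ∀ i j, i ≤ a → j ≤ b → D i j = D j i := by
          intro i j hia hjb
          exact ihs i j (by omega)
        have hsym'' : ∀ i j, i ≤ b → j ≤ a → D i j = D j i := by
          intro i j hib hja
          exact ihs i j (by omega)
        apply le_antisymm
        · apply hab.2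
          obtain ⟨z, hz, heq⟩ := hba.1
          refine ⟨fun x y => z y x, plan_transpose α hz, ?_⟩
          rw [planCost_transpose D z hsym'', ← heq]
        · apply hba.2
          obtain ⟨z, hz, heq⟩ := hab.1
          refine ⟨fun x y => z y x, plan_transpose α hz, ?_⟩
          rw [planCost_transpose D z hsym', ← heq]
  intro i j
  exact key (i+j) i j le_rfl

lemma plan_pairing {m n : ℕ} {z : ℕ → ℕ → ℝ} (hz : IsPlan (Af α) m n z)
    (u v : ℕ → ℝ) :
    ∑ i ∈ Finset.range (m+1), ∑ j ∈ Finset.range (n+1), z i j * (u i + v j)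
      = (∑ i ∈ Finset.range (m+1), u i * kmPi (Af α) i m)
        + ∑ j ∈ Finset.range (n+1), v j * kmPi (Af α) j n := by
  have h1 : ∀ i ∈ Finset.range (m+1),
      ∑ j ∈ Finset.range (n+1), z i j * (u i + v j)
        = u i * ∑ j ∈ Finset.range (n+1), z i j
          + ∑ j ∈ Finset.range (n+1), z i j * v j := by
    intro i _
    rw [Finset.mul_sum, ← Finset.sum_add_distrib]
    apply Finset.sum_congr rfl
    intro j _; ring
  rw [Finset.sum_congr rfl h1, Finset.sum_add_distrib]
  congr 1
  · apply Finset.sum_congr rfl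
    intro i hi
    rw [hz.2.1 i (Nat.lt_succ_iff.mp (Finset.mem_range.mp hi))]
  · rw [Finset.sum_comm]
    apply Finset.sum_congr rfl
    intro j hj
    rw [← Finset.sum_mul, hz.2.2 j (Nat.lt_succ_iff.mp (Finset.mem_range.mp hj))]
    ring

lemma plan_mass {m n : ℕ} {z : ℕ → ℕ → ℝ} (hz : IsPlan (Af α) m n z) :
    ∑ i ∈ Finset.range (m+1), ∑ j ∈ Finset.range (n+1), z i j = 1 := by
  have h1 : ∀ i ∈ Finset.range (m+1),
      ∑ j ∈ Finset.range (n+1), z i j = kmPi (Af α) i m := by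
    intro i hi
    exact hz.2.1 i (Nat.lt_succ_iff.mp (Finset.mem_range.mp hi))
  rw [Finset.sum_congr rfl h1, sum_kmPi]

lemma sum_kmPi_head {m : ℕ} (hm : 1 ≤ m) :
    ∑ i ∈ Finset.range m, kmPi (Af α) i m = 1 - α := by
  have := sum_kmPi α m
  rw [Finset.sum_range_succ, kmPi_self α hm] at this
  linarith

/-- the `c = 1 - Ee` identity -/
lemma c_eq (c : ℕ → ℕ → ℝ) (hc00 : c 0 0 = 0) (hc0 : ∀ k : ℕ, c 0 (k + 1) = 1)
    (hcrec : ∀ m n : ℕ, m ≤ n →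
      c (m + 1) (n + 1) = planCost c m n (ztilde (Af α) m n)) :
    ∀ p q : ℕ, p ≤ q → c (p+1) (q+1) = 1 - Ee α p q := by
  intro p
  induction p using Nat.strong_induction_on with
  | _ p IHp =>
  intro q hpq
  rw [hcrec p q hpq, planCost_ztilde α hpq c]
  have hdiag : ∑ i ∈ Finset.range (p+1), kmPi (Af α) i q * c i i = 0 := by
    apply Finset.sum_eq_zero
    intro i hi
    have hi' := Finset.mem_range.mp hi
    match i with
    | 0 => rw [hc00, mul_zero]
    | (k+1) =>
      rw [IHp k (by omega) k le_rfl, Ee_diag]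
      norm_num
  rw [hdiag, zero_add]
  rw [Finset.sum_range_succ' (fun i => ∑ j ∈ Finset.Icc (p+1) q,
    kmPi (Af α) i p * kmPi (Af α) j q * c i j) p]
  have hzero : ∑ j ∈ Finset.Icc (p+1) q,
      kmPi (Af α) 0 p * kmPi (Af α) j q * c 0 j
        = (1-α)^p * (1 - (1-α)^(q-p)) := by
    have hc : ∀ j ∈ Finset.Icc (p+1) q,
        kmPi (Af α) 0 p * kmPi (Af α) j q * c 0 j
          = (1-α)^p * kmPi (Af α) j q := by
      intro j hj
      have hj' := Finset.mem_Icc.mp hj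
      obtain ⟨j', rfl⟩ : ∃ j', j = j' + 1 := ⟨j - 1, by omega⟩
      rw [hc0 j', kmPi_zero]
      ring
    rw [Finset.sum_congr rfl hc, ← Finset.mul_sum, sum_kmPi_Icc α hpq]
  have hmain : ∀ k ∈ Finset.range p,
      ∑ j ∈ Finset.Icc (p+1) q, kmPi (Af α) (k+1) p * kmPi (Af α) j q * c (k+1) j
        = kmPi (Af α) (k+1) p * (1 - (1-α)^(q-p))
          - ∑ j ∈ Finset.Icc (p+1) q,
              kmPi (Af α) (k+1) p * kmPi (Af α) j q * Ee α k (j-1) := by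
    intro k hk
    have hk' := Finset.mem_range.mp hk
    have hc : ∀ j ∈ Finset.Icc (p+1) q,
        kmPi (Af α) (k+1) p * kmPi (Af α) j q * c (k+1) j
          = kmPi (Af α) (k+1) p * kmPi (Af α) j q
            - kmPi (Af α) (k+1) p * kmPi (Af α) j q * Ee α k (j-1) := by
      intro j hj
      have hj' := Finset.mem_Icc.mp hj
      obtain ⟨j', rfl⟩ : ∃ j', j = j' + 1 := ⟨j - 1, by omega⟩
      rw [IHp k (by omega) j' (by omega), show j' + 1 - 1 = j' from rfl]
      ring
    rw [Finset.sum_congr rfl hc, Finset.sum_sub_distrib, ← Finset.mul_sum,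
      sum_kmPi_Icc α hpq]
  rw [Finset.sum_congr rfl hmain, Finset.sum_sub_distrib, ← Finset.sum_mul,
    sum_kmPi_range, hzero, Ee_star α hpq]
  ring

end KMaux

open KMaux

/-- Proposition: for constant `α ∈ [1/2,1)`, the recursive quantities
satisfy `0 ≤ c_{mn} - d_{mn} ≤ 4m(1-α)²` for all `0 ≤ m ≤ n` (indices shifted). -/
theorem km_c_minus_d_bound (α : ℝ) (hα : α ∈ Set.Ico (1 / 2 : ℝ) 1)
    (D : ℕ → ℕ → ℝ) (hD : IsKMDist (fun k => if k = 0 then 1 else α) D)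
    (c : ℕ → ℕ → ℝ) (hc00 : c 0 0 = 0)
    (hc0 : ∀ k : ℕ, c 0 (k + 1) = 1) (hc0' : ∀ k : ℕ, c (k + 1) 0 = 1)
    (hcrec : ∀ m n : ℕ, m ≤ n →
      c (m + 1) (n + 1) =
        planCost c m n (ztilde (fun k => if k = 0 then 1 else α) m n)) :
    ∀ m n : ℕ, m ≤ n →
      0 ≤ c (m + 1) (n + 1) - D (m + 1) (n + 1) ∧
      c (m + 1) (n + 1) - D (m + 1) (n + 1) ≤ 4 * m * (1 - α) ^ 2 := by
  have hD' : IsKMDist (Af α) D := hD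
  have hcrec' : ∀ m n : ℕ, m ≤ n →
      c (m + 1) (n + 1) = planCost c m n (ztilde (Af α) m n) := hcrec
  have hce := c_eq α c hc00 hc0 hcrec'
  have hsymD := D_symm α hD'
  have ha1 : (1/2:ℝ) ≤ α := hα.1
  have ha2 : α < 1 := hα.2
  have ha0 : (0:ℝ) ≤ α := by linarith
  have hb0 : (0:ℝ) ≤ 1 - α := by linarith
  have hb2 : (0:ℝ) ≤ (1-α)^2 := sq_nonneg _
  intro m
  induction m using Nat.strong_induction_on with
  | _ m IH =>
  intro n hmn
  rcases Nat.eq_zero_or_pos m with rfl | hm1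
  · -- m = 0 : the plan is forced, c = D
    have hforced : ∀ z : ℕ → ℕ → ℝ, IsPlan (Af α) 0 n z →
        planCost D 0 n z = 1 - (1-α)^n := by
      intro z hz
      unfold planCost
      rw [Finset.sum_range_one]
      have hz0 : ∀ j ≤ n, z 0 j = kmPi (Af α) j n := by
        intro j hj
        have h := hz.2.2 j hj
        rwa [Finset.sum_range_one] at h
      rw [Finset.sum_range_succ' (fun j => z 0 j * D 0 j) n]
      have hterm : ∀ k ∈ Finset.range n,
          z 0 (k+1) * D 0 (k+1) = kmPi (Af α) (k+1) n := by
        intro k hk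
        have hk' := Finset.mem_range.mp hk
        rw [hz0 (k+1) (by omega), hD'.2.1 k, mul_one]
      rw [Finset.sum_congr rfl hterm, sum_kmPi_range, hD'.1, mul_zero, add_zero]
    obtain ⟨z, hz, heq⟩ := (hD'.2.2.2 0 n).1
    have hDval : D 1 (n+1) = 1 - (1-α)^n := by rw [heq]; exact hforced z hz
    have hcval : c 1 (n+1) = 1 - (1-α)^n := by
      rw [hce 0 n (Nat.zero_le n), Ee_zero_row]
    rw [hDval, hcval]
    norm_num
  · -- m ≥ 1
    have hn1 : 1 ≤ n := le_trans hm1 hmn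
    -- ===== lower bound =====
    have hzt := ztilde_plan α hα hmn
    have hDle : D (m+1) (n+1) ≤ planCost D m n (ztilde (Af α) m n) :=
      (hD'.2.2.2 m n).2 ⟨_, hzt, rfl⟩
    have hDlec : ∀ i j : ℕ, i ≤ m → i ≤ j → j ≤ n → D i j ≤ c i j := by
      intro i j him hij hjn
      match i, j with
      | 0, 0 => rw [hD'.1, hc00]
      | 0, (k+1) => rw [hD'.2.1 k, hc0 k]
      | (k+1), (j'+1) =>
        have := (IH k (by omega) j' (by omega)).1
        linarith
    have hcost_le : planCost D m n (ztilde (Af α) m n)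
        ≤ planCost c m n (ztilde (Af α) m n) := by
      rw [planCost_ztilde α hmn D, planCost_ztilde α hmn c]
      apply add_le_add
      · apply Finset.sum_le_sum
        intro i hi
        have hi' := Finset.mem_range.mp hi
        exact mul_le_mul_of_nonneg_left
          (hDlec i i (by omega) le_rfl (by omega)) (kmPi_nonneg α hα i n)
      · apply Finset.sum_le_sum
        intro i hi
        apply Finset.sum_le_sum
        intro j hj
        have hi' := Finset.mem_range.mp hi
        have hj' := Finset.mem_Icc.mp hj
        exact mul_le_mul_of_nonneg_left
          (hDlec i j (by omega) (by omega) (by omega))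
          (mul_nonneg (kmPi_nonneg α hα i m) (kmPi_nonneg α hα j n))
    have hlower : 0 ≤ c (m+1) (n+1) - D (m+1) (n+1) := by
      rw [hcrec' m n hmn]
      linarith
    refine ⟨hlower, ?_⟩
    -- ===== upper bound =====
    obtain ⟨zs, hzs, hDeq⟩ := (hD'.2.2.2 m n).1
    set u : ℕ → ℝ :=
      fun i => Ee α (m-1) (n-1) - (if i = 0 then 0 else Ee α (i-1) (n-1)) with hu
    set v : ℕ → ℝ :=
      fun j => if j ≤ m then -(u j) else 1 - Ee α (m-1) (j-1) with hv
    have hslack0 : 0 ≤ 4*((m:ℝ)-1)*(1-α)^2 := by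
      have : (1:ℝ) ≤ (m:ℝ) := by exact_mod_cast hm1
      apply mul_nonneg (by linarith) hb2
    have hDge : ∀ k j', k < m → k ≤ j' →
        1 - Ee α k j' ≤ D (k+1) (j'+1) + 4*((m:ℝ)-1)*(1-α)^2 := by
      intro k j' hk hkj'
      have h2 := (IH k hk j' hkj').2
      have h1 := hce k j' hkj'
      have hcast : (k:ℝ) ≤ (m:ℝ) - 1 := by
        have : (k:ℝ)+1 ≤ (m:ℝ) := by exact_mod_cast hk
        linarith
      nlinarith [mul_le_mul_of_nonneg_right hcast hb2]
    have hfeas : ∀ i, i ≤ m → ∀ j, j ≤ n →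
        u i + v j ≤ D i j + 4*((m:ℝ)-1)*(1-α)^2 := by
      intro i him j hjn
      simp only [hu, hv]
      by_cases hjm : j ≤ m
      · rw [if_pos hjm]
        rcases Nat.lt_or_ge i j with hij | hij
        · -- i < j ≤ m
          obtain ⟨l, rfl⟩ : ∃ l, j = l + 1 := ⟨j - 1, by omega⟩
          rw [if_neg (by omega : ¬ l + 1 = 0)]
          simp only [Nat.add_sub_cancel]
          by_cases hi0 : i = 0
          · rw [if_pos hi0, hi0, hD'.2.1 l]
            have := Ee_le_one α hα l (n-1)
            linarith
          · obtain ⟨k, rfl⟩ : ∃ k, i = k + 1 := ⟨i - 1, by omega⟩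
            rw [if_neg hi0]
            simp only [Nat.add_sub_cancel]
            have hTR := Ee_TR α hα (show k ≤ l by omega) (show l ≤ n-1 by omega)
            have hDg := hDge k l (by omega) (by omega)
            linarith
        · -- j ≤ i
          have hE : (if j = 0 then (0:ℝ) else Ee α (j-1) (n-1))
              ≤ (if i = 0 then (0:ℝ) else Ee α (i-1) (n-1)) := by
            by_cases hj0 : j = 0
            · rw [if_pos hj0]
              by_cases hi0 : i = 0
              · rw [if_pos hi0]
              · rw [if_neg hi0]; exact Ee_nonneg α hα _ _
            · rw [if_neg hj0, if_neg (show ¬ i = 0 by omega)]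
              exact Ee_mono1 α hα (by omega) _
          have hDlb : -(4*((m:ℝ)-1)*(1-α)^2) ≤ D i j := by
            by_cases hj0 : j = 0
            · subst hj0
              by_cases hi0 : i = 0
              · subst hi0; rw [hD'.1]; linarith
              · obtain ⟨k, rfl⟩ : ∃ k, i = k + 1 := ⟨i - 1, by omega⟩
                rw [hD'.2.2.1 k]; linarith
            · obtain ⟨l, rfl⟩ : ∃ l, j = l + 1 := ⟨j - 1, by omega⟩
              obtain ⟨k, rfl⟩ : ∃ k, i = k + 1 := ⟨i - 1, by omega⟩
              have hs := hsymD (k+1) (l+1)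
              have hDg := hDge l k (by omega) (by omega)
              have hEe1 := Ee_le_one α hα l k
              linarith
          linarith
      · -- m < j
        rw [if_neg hjm]
        obtain ⟨l, rfl⟩ : ∃ l, j = l + 1 := ⟨j - 1, by omega⟩
        simp only [Nat.add_sub_cancel]
        by_cases hi0 : i = 0
        · rw [if_pos hi0, hi0, hD'.2.1 l]
          have hanti := Ee_anti2 α hα (show l ≤ n-1 by omega) (p := m-1)
          linarith
        · obtain ⟨k, rfl⟩ : ∃ k, i = k + 1 := ⟨i - 1, by omega⟩
          rw [if_neg hi0]
          simp only [Nat.add_sub_cancel]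
          have hMD := Ee_MD α hα (show k ≤ m-1 by omega) (show m-1 ≤ l by omega)
            (show l ≤ n-1 by omega)
          have hDg := hDge k l (by omega) (by omega)
          linarith
    -- dual comparison for the optimal plan
    have hDdual : (∑ i ∈ Finset.range (m+1), u i * kmPi (Af α) i m)
          + (∑ j ∈ Finset.range (n+1), v j * kmPi (Af α) j n)
          - 4*((m:ℝ)-1)*(1-α)^2 ≤ planCost D m n zs := by
      have hpair := plan_pairing α hzs u v
      have hmass := plan_mass α hzs
      have hstep : ∑ i ∈ Finset.range (m+1), ∑ j ∈ Finset.range (n+1),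
            (zs i j * (u i + v j) - zs i j * (4*((m:ℝ)-1)*(1-α)^2))
          ≤ ∑ i ∈ Finset.range (m+1), ∑ j ∈ Finset.range (n+1), zs i j * D i j := by
        apply Finset.sum_le_sum
        intro i hi
        apply Finset.sum_le_sum
        intro j hj
        have hi' := Finset.mem_range.mp hi
        have hj' := Finset.mem_range.mp hj
        have h0 := hzs.1 i (by omega) j (by omega)
        have hf := hfeas i (by omega) j (by omega)
        have := mul_le_mul_of_nonneg_left
          (show u i + v j - 4*((m:ℝ)-1)*(1-α)^2 ≤ D i j by linarith) h0
        nlinarith [this]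
      have hL : ∑ i ∈ Finset.range (m+1), ∑ j ∈ Finset.range (n+1),
            (zs i j * (u i + v j) - zs i j * (4*((m:ℝ)-1)*(1-α)^2))
          = (∑ i ∈ Finset.range (m+1), ∑ j ∈ Finset.range (n+1), zs i j * (u i + v j))
            - (∑ i ∈ Finset.range (m+1), ∑ j ∈ Finset.range (n+1), zs i j)
              * (4*((m:ℝ)-1)*(1-α)^2) := by
        rw [Finset.sum_mul, ← Finset.sum_sub_distrib]
        apply Finset.sum_congr rfl
        intro i _
        rw [Finset.sum_mul, ← Finset.sum_sub_distrib]
      rw [hL, hpair, hmass] at hstep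
      unfold planCost
      linarith
    -- defect bound for ztilde
    have hcval : planCost c m n (ztilde (Af α) m n)
        ≤ (∑ i ∈ Finset.range (m+1), u i * kmPi (Af α) i m)
          + (∑ j ∈ Finset.range (n+1), v j * kmPi (Af α) j n) + (1-α)^2 := by
      have hpair2 := plan_pairing α hzt u v
      -- linearity: planCost of (c - (u⊕v))
      have hlin : planCost (fun i j => c i j - (u i + v j)) m n (ztilde (Af α) m n)
          = planCost c m n (ztilde (Af α) m n)
            - ∑ i ∈ Finset.range (m+1), ∑ j ∈ Finset.range (n+1),
                ztilde (Af α) m n i j * (u i + v j) := by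
        unfold planCost
        rw [← Finset.sum_sub_distrib]
        apply Finset.sum_congr rfl
        intro i _
        rw [← Finset.sum_sub_distrib]
        apply Finset.sum_congr rfl
        intro j _
        ring
      have hsplit := planCost_ztilde α hmn (fun i j => c i j - (u i + v j))
      -- diagonal part vanishes
      have hdiag : ∑ i ∈ Finset.range (m+1),
          kmPi (Af α) i n * (c i i - (u i + v i)) = 0 := by
        apply Finset.sum_eq_zero
        intro i hi
        have hi' := Finset.mem_range.mp hi
        have hcii : c i i = 0 := by
          match i with
          | 0 => exact hc00
          | (k+1) => rw [hce k k le_rfl, Ee_diag]; ring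
        have hvi : v i = -(u i) := by rw [hv]; exact if_pos (by omega)
        rw [hcii, hvi]
        ring
      -- off-diagonal defect bound
      have hoff : ∑ i ∈ Finset.range (m+1), ∑ j ∈ Finset.Icc (m+1) n,
          kmPi (Af α) i m * kmPi (Af α) j n * (c i j - (u i + v j)) ≤ (1-α)^2 := by
        -- br facts
        have hbr_le : ∀ i, i ≤ m → ∀ j, m < j → j ≤ n →
            c i j - (u i + v j) ≤ 1 := by
          intro i him j hmj hjn'
          obtain ⟨l, rfl⟩ : ∃ l, j = l + 1 := ⟨j - 1, by omega⟩
          have hvj : v (l+1) = 1 - Ee α (m-1) l := by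
            simp only [hv, Nat.add_sub_cancel]
            rw [if_neg (show ¬ (l+1 ≤ m) by omega)]
          rw [hvj]
          match i with
          | 0 =>
            have hui : u 0 = Ee α (m-1) (n-1) := by
              simp only [hu]; norm_num
            rw [hc0 l, hui]
            have h1 := Ee_le_one α hα (m-1) l
            have h2 := Ee_nonneg α hα (m-1) (n-1)
            linarith
          | (k+1) =>
            have hui : u (k+1) = Ee α (m-1) (n-1) - Ee α k (n-1) := by
              simp only [hu, Nat.add_sub_cancel]
              rw [if_neg (show ¬ (k+1 = 0) by omega)]
            rw [hce k l (by omega), hui]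
            have h1 := Ee_le_one α hα (m-1) l
            have h2 := Ee_nonneg α hα k l
            have h3 := Ee_mono1 α hα (show k ≤ m-1 by omega) (n-1)
            linarith
        have hbr_n : m < n → ∀ i, i ≤ m → c i n - (u i + v n) = 0 := by
          intro hmn' i him
          have hvn : v n = 1 - Ee α (m-1) (n-1) := by
            simp only [hv]
            rw [if_neg (show ¬ (n ≤ m) by omega)]
          obtain ⟨l, hl⟩ : ∃ l, n = l + 1 := ⟨n - 1, by omega⟩
          have hln : l = n - 1 := by omega
          match i with
          | 0 =>
            have hui : u 0 = Ee α (m-1) (n-1) := by simp only [hu]; norm_num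
            rw [hvn, hui, hl, hc0 l]
            ring
          | (k+1) =>
            have hui : u (k+1) = Ee α (m-1) (n-1) - Ee α k (n-1) := by
              simp only [hu, Nat.add_sub_cancel]
              rw [if_neg (show ¬ (k+1 = 0) by omega)]
            have hcn : c (k+1) n = 1 - Ee α k (n-1) := by
              rw [hl, hce k l (by omega)]
              simp only [Nat.add_sub_cancel]
            rw [hcn, hvn, hui]
            ring
        have hbr_m : ∀ j, m < j → j ≤ n → c m j - (u m + v j) = 0 := by
          intro j hmj hjn'
          obtain ⟨l, rfl⟩ : ∃ l, j = l + 1 := ⟨j - 1, by omega⟩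
          have hvj : v (l+1) = 1 - Ee α (m-1) l := by
            simp only [hv, Nat.add_sub_cancel]
            rw [if_neg (show ¬ (l+1 ≤ m) by omega)]
          have hum : u m = 0 := by
            simp only [hu]
            rw [if_neg (show ¬ (m = 0) by omega)]
            ring
          have hcm : c m (l+1) = 1 - Ee α (m-1) l := by
            obtain ⟨m', rfl⟩ : ∃ m', m = m' + 1 := ⟨m - 1, by omega⟩
            rw [hce m' l (by omega)]
            congr 1
          rw [hcm, hum, hvj]
          ring
        rw [Finset.sum_range_succ]
        have hTm : ∑ j ∈ Finset.Icc (m+1) n,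
            kmPi (Af α) m m * kmPi (Af α) j n * (c m j - (u m + v j)) = 0 := by
          apply Finset.sum_eq_zero
          intro j hj
          have hj' := Finset.mem_Icc.mp hj
          rw [hbr_m j (by omega) (by omega), mul_zero]
        rw [hTm, add_zero]
        have hTi : ∀ i ∈ Finset.range m,
            ∑ j ∈ Finset.Icc (m+1) n,
              kmPi (Af α) i m * kmPi (Af α) j n * (c i j - (u i + v j))
            ≤ kmPi (Af α) i m * (1-α) := by
          intro i hi
          have hi' := Finset.mem_range.mp hi
          have hassoc : ∀ j ∈ Finset.Icc (m+1) n,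
              kmPi (Af α) i m * kmPi (Af α) j n * (c i j - (u i + v j))
                = kmPi (Af α) i m * (kmPi (Af α) j n * (c i j - (u i + v j))) := by
            intro j _; ring
          rw [Finset.sum_congr rfl hassoc, ← Finset.mul_sum]
          apply mul_le_mul_of_nonneg_left ?_ (kmPi_nonneg α hα i m)
          -- inner sum ≤ 1 - α
          have hterm : ∀ j ∈ Finset.Icc (m+1) n,
              kmPi (Af α) j n * (c i j - (u i + v j))
                ≤ (if j = n then 0 else kmPi (Af α) j n) := by
            intro j hj
            have hj' := Finset.mem_Icc.mp hj
            by_cases hjn' : j = n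
            · rw [if_pos hjn', hjn', hbr_n (by omega) i (by omega), mul_zero]
            · rw [if_neg hjn']
              have h1 := hbr_le i (by omega) j (by omega) (by omega)
              have h2 := kmPi_nonneg α hα j n
              nlinarith
          have hsum2 : ∑ j ∈ Finset.Icc (m+1) n,
              (if j = n then (0:ℝ) else kmPi (Af α) j n) ≤ 1 - α := by
            have heq2 : ∀ j ∈ Finset.Icc (m+1) n,
                (if j = n then (0:ℝ) else kmPi (Af α) j n)
                  = kmPi (Af α) j n - (if j = n then kmPi (Af α) j n else 0) := by
              intro j _
              by_cases hjn' : j = n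
              · rw [if_pos hjn', if_pos hjn']; ring
              · rw [if_neg hjn', if_neg hjn']; ring
            rw [Finset.sum_congr rfl heq2, Finset.sum_sub_distrib, sum_kmPi_Icc α hmn,
              Finset.sum_ite_eq' (Finset.Icc (m+1) n) n (fun j => kmPi (Af α) j n)]
            by_cases hmn' : m < n
            · rw [if_pos (Finset.mem_Icc.mpr (by omega)), kmPi_self α (by omega)]
              have : (0:ℝ) ≤ (1-α)^(n-m) := pow_nonneg hb0 _
              linarith
            · rw [if_neg (by simp only [Finset.mem_Icc]; omega)]
              have : n - m = 0 := by omega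
              rw [this, pow_zero]
              linarith
          calc ∑ j ∈ Finset.Icc (m+1) n, kmPi (Af α) j n * (c i j - (u i + v j))
              ≤ ∑ j ∈ Finset.Icc (m+1) n, (if j = n then (0:ℝ) else kmPi (Af α) j n) :=
                Finset.sum_le_sum hterm
            _ ≤ 1 - α := hsum2
        calc ∑ i ∈ Finset.range m, ∑ j ∈ Finset.Icc (m+1) n,
              kmPi (Af α) i m * kmPi (Af α) j n * (c i j - (u i + v j))
            ≤ ∑ i ∈ Finset.range m, kmPi (Af α) i m * (1-α) := Finset.sum_le_sum hTi
          _ = (1-α) * ∑ i ∈ Finset.range m, kmPi (Af α) i m := by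
              rw [Finset.mul_sum]; apply Finset.sum_congr rfl; intro i _; ring
          _ = (1-α) * (1-α) := by rw [sum_kmPi_head α hm1]
          _ = (1-α)^2 := by ring
      have := hsplit
      rw [hlin, hdiag, zero_add] at this
      linarith [hpair2, hoff, this]
    have hfin : c (m+1) (n+1) - D (m+1) (n+1)
        ≤ (1-α)^2 + 4*((m:ℝ)-1)*(1-α)^2 := by
      rw [hcrec' m n hmn, hDeq]
      linarith
    have hm1' : (1:ℝ) ≤ (m:ℝ) := by exact_mod_cast hm1
    nlinarith [hb2]
end
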